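/- arXiv:2203.09058 — 2 statements merged into one kernel-verified Lean document; each statement's English description precedes it below -/
import Mathlib

section
/- For every k ∈ ℕ with k ≥ 1 and all x, y ∈ ℝ, 2(x − y)·h_k(x)h_k(y) = −(A^{(y)} − A^{(x)})[ h_{k}(x)h_{k}(y) − h_{k−1}(x)h_{k−1}(y) ], where A^{(x)} = −∂_x + x and A^{(y)} = −∂_y + y. -/
open Real

/-- Physicists' Hermite polynomial. -/
noncomputable def H (k : ℕ) (t : ℝ) : ℝ :=
  (-1 : ℝ) ^ k * Real.exp (t ^ 2) * iteratedDeriv k (fun s : ℝ => Real.exp (-s ^ 2)) t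

/-- Hermite function. -/
noncomputable def h (k : ℕ) (t : ℝ) : ℝ :=
  ((2 : ℝ) ^ k * (Nat.factorial k : ℝ) * Real.sqrt Real.pi) ^ (-(1 : ℝ) / 2)
    * H k t * Real.exp (-t ^ 2 / 2)

/-- Creation operator in the x variable. -/
noncomputable def Ax (f : ℝ → ℝ → ℝ) : ℝ → ℝ → ℝ :=
  fun x y => -(deriv (fun s => f s y) x) + x * f x y

/-- Creation operator in the y variable. -/
noncomputable def Ay (f : ℝ → ℝ → ℝ) : ℝ → ℝ → ℝ :=
  fun x y => -(deriv (fun s => f x s) y) + y * f x y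

/-- The operator D = A^(y) - A^(x). -/
noncomputable def D (f : ℝ → ℝ → ℝ) : ℝ → ℝ → ℝ :=
  fun x y => Ay f x y - Ax f x y

/-- Normalization constant. -/
noncomputable def c (k : ℕ) : ℝ :=
  ((2 : ℝ) ^ k * (Nat.factorial k : ℝ) * Real.sqrt Real.pi) ^ (-(1 : ℝ) / 2)

lemma h_eq (k : ℕ) (t : ℝ) : h k t = c k * H k t * Real.exp (-t ^ 2 / 2) := rfl

open scoped ContDiff in
lemma g_smooth : ContDiff ℝ ∞ (fun s : ℝ => Real.exp (-s ^ 2)) :=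
  ((contDiff_id.pow 2).neg).exp

open scoped ContDiff in
lemma H_contDiff (k : ℕ) : ContDiff ℝ ∞ (H k) := by
  have h1 : ContDiff ℝ ∞ (iteratedDeriv k (fun s : ℝ => Real.exp (-s ^ 2))) := by
    rw [iteratedDeriv_eq_iterate]
    exact g_smooth.iterate_deriv k
  exact (contDiff_const.mul ((contDiff_id.pow 2).exp)).mul h1

lemma H_diff (k : ℕ) (t : ℝ) : HasDerivAt (H k) (deriv (H k) t) t :=
  (((H_contDiff k).differentiable (by simp)) t).hasDerivAt

lemma iter_eq (k : ℕ) (t : ℝ) :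
    iteratedDeriv k (fun s : ℝ => Real.exp (-s ^ 2)) t
      = (-1 : ℝ) ^ k * (H k t * Real.exp (-t ^ 2)) := by
  have hee : Real.exp (t ^ 2) * Real.exp (-t ^ 2) = 1 := by
    rw [← Real.exp_add]; simp
  have hpp : ((-1 : ℝ) ^ k) * ((-1 : ℝ) ^ k) = 1 := by
    rw [← mul_pow]; norm_num
  unfold H
  set d := iteratedDeriv k (fun s : ℝ => Real.exp (-s ^ 2)) t with hd
  linear_combination (-((-1 : ℝ) ^ k * (-1 : ℝ) ^ k * d)) * hee + (-d) * hpp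

lemma H_creation (k : ℕ) (t : ℝ) :
    deriv (H k) t = 2 * t * H k t - H (k + 1) t := by
  have hexp : HasDerivAt (fun s : ℝ => Real.exp (-s ^ 2)) (-(2 * t) * Real.exp (-t ^ 2)) t := by
    have h1 : HasDerivAt (fun s : ℝ => -s ^ 2) (-(2 * t)) t := by
      exact (hasDerivAt_pow 2 t).neg.congr_deriv (by norm_num)
    simpa [mul_comm] using h1.exp
  have hprod : HasDerivAt (fun s => (-1 : ℝ) ^ k * (H k s * Real.exp (-s ^ 2)))
      ((-1 : ℝ) ^ k * (deriv (H k) t * Real.exp (-t ^ 2)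
        + H k t * (-(2 * t) * Real.exp (-t ^ 2)))) t :=
    ((H_diff k t).mul hexp).const_mul _
  have h2 : iteratedDeriv (k + 1) (fun s : ℝ => Real.exp (-s ^ 2)) t
      = (-1 : ℝ) ^ k * (deriv (H k) t * Real.exp (-t ^ 2)
        + H k t * (-(2 * t) * Real.exp (-t ^ 2))) := by
    rw [iteratedDeriv_succ]
    have hfun : iteratedDeriv k (fun s : ℝ => Real.exp (-s ^ 2))
        = fun s => (-1 : ℝ) ^ k * (H k s * Real.exp (-s ^ 2)) := funext (iter_eq k)
    rw [hfun]
    exact hprod.deriv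
  have h3 : H (k + 1) t = (-1 : ℝ) ^ (k + 1) * Real.exp (t ^ 2)
      * ((-1 : ℝ) ^ k * (deriv (H k) t * Real.exp (-t ^ 2)
        + H k t * (-(2 * t) * Real.exp (-t ^ 2)))) := by
    rw [H, h2]
  have hee : Real.exp (t ^ 2) * Real.exp (-t ^ 2) = 1 := by
    rw [← Real.exp_add]; simp
  have hpp : ((-1 : ℝ) ^ k) * ((-1 : ℝ) ^ k) = 1 := by
    rw [← mul_pow]; norm_num
  rw [h3]
  set d := deriv (H k) t with hd
  linear_combination (-((d - 2 * t * H k t) * ((-1 : ℝ) ^ k * (-1 : ℝ) ^ k))) * hee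
    + (-(d - 2 * t * H k t)) * hpp

lemma H_zero (t : ℝ) : H 0 t = 1 := by
  unfold H
  rw [iteratedDeriv_zero]
  simp [← Real.exp_add]

lemma H_deriv : ∀ (k : ℕ) (t : ℝ), deriv (H (k + 1)) t = 2 * ((k : ℝ) + 1) * H k t := by
  intro k
  induction k with
  | zero =>
    intro t
    have hH1 : H 1 = fun t : ℝ => 2 * t := by
      funext s
      have h1 := H_creation 0 s
      have h0 : H 0 = fun _ : ℝ => (1 : ℝ) := funext H_zero
      rw [h0] at h1
      simp only [deriv_const'] at h1
      show H (0 + 1) s = 2 * s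
      linarith
    rw [show (0 : ℕ) + 1 = 1 from rfl, hH1]
    have : HasDerivAt (fun t : ℝ => 2 * t) (2 * 1) t := (hasDerivAt_id t).const_mul 2
    rw [this.deriv, H_zero]
    norm_num
  | succ k ih =>
    intro t
    have hrec : H (k + 1 + 1) = fun s : ℝ => 2 * s * H (k + 1) s - 2 * ((k : ℝ) + 1) * H k s := by
      funext s
      have h1 := H_creation (k + 1) s
      rw [ih s] at h1
      linarith
    have hd : HasDerivAt (fun s : ℝ => 2 * s * H (k + 1) s - 2 * ((k : ℝ) + 1) * H k s)
        (2 * H (k + 1) t + 2 * t * deriv (H (k + 1)) t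
          - 2 * ((k : ℝ) + 1) * deriv (H k) t) t := by
      have hA : HasDerivAt (fun s : ℝ => 2 * s) 2 t := by
        simpa using (hasDerivAt_id t).const_mul (2 : ℝ)
      have := (hA.mul (H_diff (k + 1) t)).sub ((H_diff k t).const_mul (2 * ((k : ℝ) + 1)))
      exact this
    rw [hrec, hd.deriv, ih t, H_creation k t]
    push_cast
    ring

lemma h_hasDerivAt (k : ℕ) (t : ℝ) :
    HasDerivAt (h k) (c k * (deriv (H k) t - t * H k t) * Real.exp (-t ^ 2 / 2)) t := by
  have hE : HasDerivAt (fun s : ℝ => Real.exp (-s ^ 2 / 2)) (-t * Real.exp (-t ^ 2 / 2)) t := by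
    have h1 : HasDerivAt (fun s : ℝ => -s ^ 2 / 2) (-t) t := by
      have h2 := ((hasDerivAt_pow 2 t).neg).div_const 2
      exact h2.congr_deriv (by norm_num; ring)
    simpa [mul_comm] using h1.exp
  have h2 : HasDerivAt (h k)
      (c k * deriv (H k) t * Real.exp (-t ^ 2 / 2)
        + c k * H k t * (-t * Real.exp (-t ^ 2 / 2))) t :=
    (((H_diff k t).const_mul (c k)).mul hE)
  convert h2 using 1
  ring

lemma c_sq (k : ℕ) : c k ^ 2 = ((2 : ℝ) ^ k * (Nat.factorial k : ℝ) * Real.sqrt Real.pi)⁻¹ := by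
  unfold c
  have hpos : (0 : ℝ) < (2 : ℝ) ^ k * (Nat.factorial k : ℝ) * Real.sqrt Real.pi := by
    have := Real.sqrt_pos.mpr Real.pi_pos
    positivity
  rw [← Real.rpow_natCast (_ ^ (-(1 : ℝ) / 2)) 2, ← Real.rpow_mul hpos.le]
  rw [show (-(1 : ℝ) / 2 * ((2 : ℕ) : ℝ)) = -1 by push_cast; norm_num, Real.rpow_neg_one]

lemma c_rel (m : ℕ) : c m ^ 2 = 2 * ((m : ℝ) + 1) * c (m + 1) ^ 2 := by
  rw [c_sq, c_sq, pow_succ, Nat.factorial_succ]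
  have h2 : (0 : ℝ) < (2 : ℝ) ^ m := by positivity
  have hf : (0 : ℝ) < (Nat.factorial m : ℝ) := by
    exact_mod_cast Nat.factorial_pos m
  have hs : (0 : ℝ) < Real.sqrt Real.pi := Real.sqrt_pos.mpr Real.pi_pos
  push_cast
  field_simp

theorem FDI6_pos (k : ℕ) (hk : 1 ≤ k) (x y : ℝ) :
    2 * (x - y) * (h k x * h k y)
      = -(D (fun s t => h k s * h k t - h (k - 1) s * h (k - 1) t) x y) := by
  obtain ⟨m, rfl⟩ : ∃ m, k = m + 1 := ⟨k - 1, (Nat.succ_pred_eq_of_pos hk).symm⟩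
  simp only [Nat.add_sub_cancel, D, Ax, Ay]
  have dX : deriv (fun s => h (m + 1) s * h (m + 1) y - h m s * h m y) x
      = c (m + 1) * (deriv (H (m + 1)) x - x * H (m + 1) x) * Real.exp (-x ^ 2 / 2) * h (m + 1) y
        - c m * (deriv (H m) x - x * H m x) * Real.exp (-x ^ 2 / 2) * h m y :=
    (((h_hasDerivAt (m + 1) x).mul_const (h (m + 1) y)).sub
      ((h_hasDerivAt m x).mul_const (h m y))).deriv
  have dY : deriv (fun s => h (m + 1) x * h (m + 1) s - h m x * h m s) y
      = h (m + 1) x * (c (m + 1) * (deriv (H (m + 1)) y - y * H (m + 1) y) * Real.exp (-y ^ 2 / 2))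
        - h m x * (c m * (deriv (H m) y - y * H m y) * Real.exp (-y ^ 2 / 2)) := by
    have := (((h_hasDerivAt (m + 1) y).const_mul (h (m + 1) x)).sub
      ((h_hasDerivAt m y).const_mul (h m x))).deriv
    exact this
  rw [dX, dY, H_deriv m x, H_deriv m y, H_creation m x, H_creation m y]
  simp only [h_eq]
  linear_combination (Real.exp (-x ^ 2 / 2) * Real.exp (-y ^ 2 / 2)
    * (H (m + 1) x * H m y - H m x * H (m + 1) y)) * c_rel m
end

section
/- Cotlar–Knapp–Stein almost orthogonality lemma: let {T_j}_{j∈ℤ} be bounded operators on a Hilbert space H such that ‖T_j* T_k‖ + ‖T_j T_k*‖ ≤ γ(j−k) for all j, k, where γ : ℤ → [0,∞) satisfies Σ_{m∈ℤ} √(γ(m)) = C < ∞. Then for every finite subset Λ ⊆ ℤ, ‖Σ_{j∈Λ} T_j‖ ≤ C. -/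
open ContinuousLinearMap

/-- Product of `star (T p.1) * T p.2` along a list of index pairs. -/
noncomputable def cksW {R : Type*} [Monoid R] [Star R] (T : ℤ → R) : List (ℤ × ℤ) → R
  | [] => 1
  | p :: L => (star (T p.1) * T p.2) * cksW T L

/-- Diagonal weight product along a list. -/
noncomputable def cksDiag (w : ℤ → ℝ) : List (ℤ × ℤ) → ℝ
  | [] => 1
  | p :: L => w (p.1 - p.2) * cksDiag w L

/-- Off-diagonal (chain) weight product along a list. -/
noncomputable def cksChain (w : ℤ → ℝ) : ℤ → List (ℤ × ℤ) → ℝ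
  | _, [] => 1
  | k', p :: L => w (k' - p.1) * cksChain w p.2 L

/-- Finset of lists of length `n` with entries in `Λ ×ˢ Λ`. -/
def cksLS (Λ : Finset ℤ) : ℕ → Finset (List (ℤ × ℤ))
  | 0 => {[]}
  | n + 1 => ((Λ ×ˢ Λ) ×ˢ cksLS Λ n).map
      ⟨fun x => x.1 :: x.2, by rintro ⟨a, l⟩ ⟨b, m⟩ h; simp_all⟩

theorem cotlar_knapp_stein {H : Type*} [NormedAddCommGroup H] [InnerProductSpace ℂ H]
    [CompleteSpace H] (T : ℤ → H →L[ℂ] H) (γ : ℤ → ℝ) (hγ : ∀ m, 0 ≤ γ m) (C : ℝ)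
    (hbound : ∀ j k : ℤ,
      ‖(adjoint (T j)).comp (T k)‖ + ‖(T j).comp (adjoint (T k))‖ ≤ γ (j - k))
    (hsum : HasSum (fun m => Real.sqrt (γ m)) C) :
    ∀ Λ : Finset ℤ, ‖∑ j ∈ Λ, T j‖ ≤ C := by
  intro Λ
  set g : ℤ → ℝ := fun m => Real.sqrt (γ m) with hgdef
  have hgnn : ∀ m, 0 ≤ g m := fun m => Real.sqrt_nonneg _
  have hC0 : 0 ≤ C := hsum.nonneg hgnn
  -- the two basic operator bounds
  have hTb1 : ∀ j k, ‖star (T j) * T k‖ ≤ γ (j - k) := by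
    intro j k
    have h1 : star (T j) * T k = (adjoint (T j)).comp (T k) := by
      rw [mul_def, star_eq_adjoint]
    rw [h1]
    exact le_trans (le_add_of_nonneg_right (norm_nonneg _)) (hbound j k)
  have hTb2 : ∀ j k, ‖T j * star (T k)‖ ≤ γ (j - k) := by
    intro j k
    have h1 : T j * star (T k) = (T j).comp (adjoint (T k)) := by
      rw [mul_def, star_eq_adjoint]
    rw [h1]
    exact le_trans (le_add_of_nonneg_left (norm_nonneg _)) (hbound j k)
  have hTnorm : ∀ j, ‖T j‖ ≤ g 0 := by
    intro j
    have h1 : ‖T j‖ * ‖T j‖ ≤ γ 0 := by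
      have := hTb1 j j
      rwa [sub_self, CStarRing.norm_star_mul_self] at this
    have : ‖T j‖ = Real.sqrt (‖T j‖ * ‖T j‖) := (Real.sqrt_mul_self (norm_nonneg _)).symm
    rw [this]
    exact Real.sqrt_le_sqrt h1
  -- row sums of g are bounded by C
  have hrow : ∀ (j : ℤ) (s : Finset ℤ), (∑ k ∈ s, g (j - k)) ≤ C := by
    intro j s
    have hinj : ∀ a ∈ s, ∀ b ∈ s, j - a = j - b → a = b := by intro a _ b _ h; omega
    calc (∑ k ∈ s, g (j - k)) = ∑ m ∈ s.image (fun k => j - k), g m :=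
          (Finset.sum_image hinj).symm
      _ ≤ C := sum_le_hasSum _ (fun m _ => hgnn m) hsum
  -- nonnegativity of diag and chain
  have hdiagnn : ∀ (w : ℤ → ℝ), (∀ m, 0 ≤ w m) → ∀ L, 0 ≤ cksDiag w L := by
    intro w hw L
    induction L with
    | nil => simp [cksDiag]
    | cons p L ih => exact mul_nonneg (hw _) ih
  have hchainnn : ∀ (w : ℤ → ℝ), (∀ m, 0 ≤ w m) → ∀ (k' : ℤ) (L : List (ℤ × ℤ)),
      0 ≤ cksChain w k' L := by
    intro w hw k' L
    induction L generalizing k' with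
    | nil => simp [cksChain]
    | cons p L ih => exact mul_nonneg (hw _) (ih p.2)
  -- sqrt of diag and chain
  have hsqrtdiag : ∀ L, Real.sqrt (cksDiag γ L) = cksDiag g L := by
    intro L
    induction L with
    | nil => simp [cksDiag]
    | cons p L ih => rw [cksDiag, cksDiag, Real.sqrt_mul (hγ _), ih]
  have hsqrtchain : ∀ (k' : ℤ) (L : List (ℤ × ℤ)),
      Real.sqrt (cksChain γ k' L) = cksChain g k' L := by
    intro k' L
    induction L generalizing k' with
    | nil => simp [cksChain]
    | cons p L ih => rw [cksChain, cksChain, Real.sqrt_mul (hγ _), ih p.2]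
  -- bound 1 : diagonal pairing
  have hWdiag : ∀ L, ‖cksW T L‖ ≤ cksDiag γ L := by
    intro L
    induction L with
    | nil =>
      rw [cksW, cksDiag, ContinuousLinearMap.one_def]
      exact ContinuousLinearMap.norm_id_le
    | cons p L ih =>
      rw [cksW, cksDiag]
      calc ‖(star (T p.1) * T p.2) * cksW T L‖ ≤ ‖star (T p.1) * T p.2‖ * ‖cksW T L‖ :=
            norm_mul_le _ _
        _ ≤ γ (p.1 - p.2) * cksDiag γ L :=
            mul_le_mul (hTb1 p.1 p.2) ih (norm_nonneg _) (hγ _)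
  -- bound 2 : chain pairing
  have hWchain : ∀ (L : List (ℤ × ℤ)) (k' : ℤ),
      ‖T k' * cksW T L‖ ≤ g 0 * cksChain γ k' L := by
    intro L
    induction L with
    | nil =>
      intro k'
      rw [cksW, cksChain, mul_one, mul_one]
      exact hTnorm k'
    | cons p L ih =>
      intro k'
      have hre : T k' * cksW T (p :: L) = (T k' * star (T p.1)) * (T p.2 * cksW T L) := by
        rw [cksW]; noncomm_ring
      rw [hre, cksChain]
      calc ‖(T k' * star (T p.1)) * (T p.2 * cksW T L)‖
          ≤ ‖T k' * star (T p.1)‖ * ‖T p.2 * cksW T L‖ := norm_mul_le _ _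
        _ ≤ γ (k' - p.1) * (g 0 * cksChain γ p.2 L) :=
            mul_le_mul (hTb2 k' p.1) (ih p.2) (norm_nonneg _) (hγ _)
        _ = g 0 * (γ (k' - p.1) * cksChain γ p.2 L) := by ring
  -- geometric-mean term bound
  have hterm : ∀ (p : ℤ × ℤ) (L : List (ℤ × ℤ)),
      ‖cksW T (p :: L)‖ ≤ g 0 * (g (p.1 - p.2) * (cksDiag g L * cksChain g p.2 L)) := by
    intro p L
    set x := ‖cksW T (p :: L)‖ with hx
    have hx0 : 0 ≤ x := norm_nonneg _
    have h1 : x ≤ γ (p.1 - p.2) * cksDiag γ L := by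
      have := hWdiag (p :: L); rwa [cksDiag] at this
    have h2 : x ≤ g 0 * (g 0 * cksChain γ p.2 L) := by
      have hre : cksW T (p :: L) = star (T p.1) * (T p.2 * cksW T L) := by
        rw [cksW, mul_assoc]
      rw [hx, hre]
      calc ‖star (T p.1) * (T p.2 * cksW T L)‖
          ≤ ‖star (T p.1)‖ * ‖T p.2 * cksW T L‖ := norm_mul_le _ _
        _ ≤ g 0 * (g 0 * cksChain γ p.2 L) := by
            apply mul_le_mul _ (hWchain L p.2) (norm_nonneg _) (hgnn 0)
            rw [norm_star]; exact hTnorm p.1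
    have hA0 : 0 ≤ γ (p.1 - p.2) * cksDiag γ L := mul_nonneg (hγ _) (hdiagnn γ hγ L)
    have hsq : x * x ≤ (γ (p.1 - p.2) * cksDiag γ L) * (g 0 * (g 0 * cksChain γ p.2 L)) :=
      mul_le_mul h1 h2 hx0 hA0
    have hgg : g 0 * (g 0 * cksChain γ p.2 L) = γ 0 * cksChain γ p.2 L := by
      rw [← mul_assoc, Real.mul_self_sqrt (hγ 0)]
    calc x = Real.sqrt (x * x) := (Real.sqrt_mul_self hx0).symm
      _ ≤ Real.sqrt ((γ (p.1 - p.2) * cksDiag γ L) * (g 0 * (g 0 * cksChain γ p.2 L))) :=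
          Real.sqrt_le_sqrt hsq
      _ = g 0 * (g (p.1 - p.2) * (cksDiag g L * cksChain g p.2 L)) := by
          rw [hgg, Real.sqrt_mul hA0, Real.sqrt_mul (hγ _), Real.sqrt_mul (hγ 0),
            hsqrtdiag, hsqrtchain]
          ring
  -- sum of the weights over all lists
  have hsumLS : ∀ (n : ℕ) (k' : ℤ),
      (∑ L ∈ cksLS Λ n, cksDiag g L * cksChain g k' L) ≤ C ^ (2 * n) := by
    intro n
    induction n with
    | zero => intro k'; simp [cksLS, cksDiag, cksChain]
    | succ n ih =>
      intro k'
      have expand : (∑ L ∈ cksLS Λ (n + 1), cksDiag g L * cksChain g k' L)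
          = ∑ j ∈ Λ, ∑ k ∈ Λ, g (k' - j) *
              (g (j - k) * ∑ L ∈ cksLS Λ n, cksDiag g L * cksChain g k L) := by
        rw [cksLS, Finset.sum_map]
        conv_lhs => rw [Finset.sum_product]
        conv_lhs => rw [Finset.sum_product]
        refine Finset.sum_congr rfl fun j _ => Finset.sum_congr rfl fun k _ => ?_
        rw [Finset.mul_sum, Finset.mul_sum]
        refine Finset.sum_congr rfl fun L _ => ?_
        show cksDiag g ((j, k) :: L) * cksChain g k' ((j, k) :: L) = _
        simp only [cksDiag, cksChain]
        ring
      rw [expand]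
      calc (∑ j ∈ Λ, ∑ k ∈ Λ, g (k' - j) *
              (g (j - k) * ∑ L ∈ cksLS Λ n, cksDiag g L * cksChain g k L))
          ≤ ∑ j ∈ Λ, ∑ k ∈ Λ, g (k' - j) * (g (j - k) * C ^ (2 * n)) := by
            refine Finset.sum_le_sum fun j _ => Finset.sum_le_sum fun k _ => ?_
            exact mul_le_mul_of_nonneg_left
              (mul_le_mul_of_nonneg_left (ih k) (hgnn _)) (hgnn _)
        _ = ∑ j ∈ Λ, g (k' - j) * ((∑ k ∈ Λ, g (j - k)) * C ^ (2 * n)) := by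
            refine Finset.sum_congr rfl fun j _ => ?_
            rw [Finset.sum_mul, Finset.mul_sum]
        _ ≤ ∑ j ∈ Λ, g (k' - j) * (C * C ^ (2 * n)) := by
            refine Finset.sum_le_sum fun j _ => ?_
            exact mul_le_mul_of_nonneg_left
              (mul_le_mul_of_nonneg_right (hrow j Λ) (by positivity)) (hgnn _)
        _ = (∑ j ∈ Λ, g (k' - j)) * (C * C ^ (2 * n)) := by rw [Finset.sum_mul]
        _ ≤ C * (C * C ^ (2 * n)) :=
            mul_le_mul_of_nonneg_right (hrow k' Λ) (by positivity)
        _ = C ^ (2 * (n + 1)) := by ring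
  -- expansion of powers
  have hexp : ∀ n : ℕ,
      (∑ j ∈ Λ, ∑ k ∈ Λ, star (T j) * T k) ^ n = ∑ L ∈ cksLS Λ n, cksW T L := by
    intro n
    induction n with
    | zero => simp [cksLS, cksW]
    | succ n ih =>
      rw [pow_succ', ih, cksLS, Finset.sum_map]
      conv_rhs => rw [Finset.sum_product]
      conv_rhs => rw [Finset.sum_product]
      rw [Finset.sum_mul]
      refine Finset.sum_congr rfl fun j _ => ?_
      rw [Finset.sum_mul]
      refine Finset.sum_congr rfl fun k _ => ?_
      rw [Finset.mul_sum]
      refine Finset.sum_congr rfl fun L _ => ?_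
      show _ = cksW T ((j, k) :: L)
      simp only [cksW]
  -- main bound on powers
  have hA : ∀ n : ℕ, ‖(∑ j ∈ Λ, ∑ k ∈ Λ, star (T j) * T k) ^ (n + 1)‖
      ≤ (Λ.card : ℝ) * g 0 * C ^ (2 * n + 1) := by
    intro n
    rw [hexp (n + 1), cksLS, Finset.sum_map]
    refine le_trans (norm_sum_le _ _) ?_
    show ∑ i ∈ (Λ ×ˢ Λ) ×ˢ cksLS Λ n, ‖cksW T (i.1 :: i.2)‖ ≤ _
    rw [Finset.sum_product]
    rw [Finset.sum_product]
    calc (∑ j ∈ Λ, ∑ k ∈ Λ, ∑ L ∈ cksLS Λ n, ‖cksW T ((j, k) :: L)‖)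
        ≤ ∑ j ∈ Λ, ∑ k ∈ Λ, ∑ L ∈ cksLS Λ n,
            g 0 * (g (j - k) * (cksDiag g L * cksChain g k L)) := by
          refine Finset.sum_le_sum fun j _ => Finset.sum_le_sum fun k _ =>
            Finset.sum_le_sum fun L _ => ?_
          exact hterm (j, k) L
      _ = ∑ j ∈ Λ, ∑ k ∈ Λ, g 0 *
            (g (j - k) * ∑ L ∈ cksLS Λ n, cksDiag g L * cksChain g k L) := by
          refine Finset.sum_congr rfl fun j _ => Finset.sum_congr rfl fun k _ => ?_
          rw [Finset.mul_sum, Finset.mul_sum]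
      _ ≤ ∑ j ∈ Λ, ∑ k ∈ Λ, g 0 * (g (j - k) * C ^ (2 * n)) := by
          refine Finset.sum_le_sum fun j _ => Finset.sum_le_sum fun k _ => ?_
          exact mul_le_mul_of_nonneg_left
            (mul_le_mul_of_nonneg_left (hsumLS n k) (hgnn _)) (hgnn 0)
      _ = ∑ j ∈ Λ, (g 0 * C ^ (2 * n)) * ∑ k ∈ Λ, g (j - k) := by
          refine Finset.sum_congr rfl fun j _ => ?_
          rw [Finset.mul_sum]
          exact Finset.sum_congr rfl fun k _ => by ring
      _ ≤ ∑ j ∈ Λ, (g 0 * C ^ (2 * n)) * C := by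
          refine Finset.sum_le_sum fun j _ => ?_
          exact mul_le_mul_of_nonneg_left (hrow j Λ) (by positivity)
      _ = (Λ.card : ℝ) * ((g 0 * C ^ (2 * n)) * C) := by
          rw [Finset.sum_const, nsmul_eq_mul]
      _ = (Λ.card : ℝ) * g 0 * C ^ (2 * n + 1) := by ring
  -- C*-algebra facts
  set S : H →L[ℂ] H := ∑ j ∈ Λ, T j with hSdef
  have hSA : star S * S = ∑ j ∈ Λ, ∑ k ∈ Λ, star (T j) * T k := by
    rw [hSdef, star_sum, Finset.sum_mul_sum]
  have hself : IsSelfAdjoint (star S * S) := IsSelfAdjoint.star_mul_self S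
  have hpow : ∀ t : ℕ, ‖star S * S‖ ^ (2 ^ t) = ‖(star S * S) ^ (2 ^ t)‖ := by
    intro t
    have := hself.nnnorm_pow_two_pow t
    have h2 := congrArg (fun x : NNReal => (x : ℝ)) this
    simpa using h2.symm
  have hnorm2 : ‖S‖ * ‖S‖ = ‖star S * S‖ := CStarRing.norm_star_mul_self.symm
  -- conclusion
  by_contra hcon
  push_neg at hcon
  rcases eq_or_lt_of_le hC0 with hC | hC
  · -- C = 0 case
    have hg0 : g 0 = 0 := by
      have h1 : g 0 ≤ C := le_hasSum hsum 0 (fun m _ => hgnn m)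
      have h2 := hgnn 0
      linarith
    have hT0 : ∀ j, T j = 0 := by
      intro j
      have := hTnorm j
      rw [hg0] at this
      exact norm_le_zero_iff.mp this
    have hS0 : S = 0 := Finset.sum_eq_zero fun j _ => hT0 j
    rw [hS0] at hcon
    simp at hcon
    linarith
  · -- 0 < C case
    set K := (Λ.card : ℝ) * g 0 with hKdef
    have hK0 : 0 ≤ K := mul_nonneg (Nat.cast_nonneg _) (hgnn 0)
    have hKC : ∀ t : ℕ, ‖S‖ ^ (2 ^ (t + 1)) ≤ K * C ^ (2 ^ (t + 1) - 1) := by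
      intro t
      have h1 : ‖S‖ ^ (2 ^ (t + 1)) = ‖star S * S‖ ^ (2 ^ t) := by
        rw [← hnorm2, ← sq, ← pow_mul, pow_succ']
      have hone : 1 ≤ 2 ^ t := Nat.one_le_two_pow
      have h2 : (2 ^ t - 1) + 1 = 2 ^ t := by omega
      have h3 := hA (2 ^ t - 1)
      rw [h2, ← hSA] at h3
      have h4 : 2 * (2 ^ t - 1) + 1 = 2 ^ (t + 1) - 1 := by
        have : 2 ^ (t + 1) = 2 * 2 ^ t := by rw [pow_succ']
        omega
      rw [h4] at h3
      rw [h1, hpow t]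
      exact h3
    have hr : 1 < ‖S‖ / C := (one_lt_div hC).mpr hcon
    obtain ⟨m, hm⟩ := pow_unbounded_of_one_lt (K / C) hr
    have hmle : m ≤ 2 ^ (m + 1) :=
      le_trans (Nat.lt_two_pow_self (n := m)).le (Nat.pow_le_pow_right (by norm_num) (Nat.le_succ m))
    have h3 : (‖S‖ / C) ^ (2 ^ (m + 1)) ≤ K / C := by
      have hN : (2 ^ (m + 1) - 1) + 1 = 2 ^ (m + 1) := by
        have : 1 ≤ 2 ^ (m + 1) := Nat.one_le_two_pow
        omega
      rw [div_pow, div_le_div_iff₀ (by positivity) hC]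
      calc ‖S‖ ^ 2 ^ (m + 1) * C ≤ (K * C ^ (2 ^ (m + 1) - 1)) * C :=
            mul_le_mul_of_nonneg_right (hKC m) hC.le
        _ = K * C ^ ((2 ^ (m + 1) - 1) + 1) := by rw [pow_succ]; ring
        _ = K * C ^ (2 ^ (m + 1)) := by rw [hN]
    have h4 : (‖S‖ / C) ^ m ≤ (‖S‖ / C) ^ (2 ^ (m + 1)) :=
      pow_le_pow_right₀ hr.le hmle
    linarith
end
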